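/- Let X be a normal complex projective surface with canonical singularities q_1, ..., q_h and smooth elsewhere, with Kodaira dimension κ(X) ≥ 0. Let f: T → X be the minimal resolution, p: T → W the morphism to the minimal model, and s = K_W² - K_T². Then Σ_{i=1}^h ν(q_i) ≤ 12χ(O_X) - (4/3)K_X² - s/3, where ν(q) = e(Δ_q) - 1/|G_q| with Δ_q the exceptional divisor over q in the minimal resolution and G_q the local fundamental group. In particular, if equality Σν(q_i) = 12χ(O_X) - (4/3)K_X² holds, then K_X is nef. -/

import Mathlib

/-- An abstract smooth complex projective surface: its group of divisors with
intersection pairing, canonical divisor, effective cone, irreducible curves,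
arithmetic genus (satisfying adjunction), and cohomology dimensions
`h⁰(D, O_D)`, `h¹(D, O_D)`, `h⁰(D, ω_D)`. -/
structure Surface where
  Div : Type
  grp : AddCommGroup Div
  inter : Div → Div → ℤ
  inter_comm : ∀ A B, inter A B = inter B A
  inter_add_left : ∀ A B C, inter (A + B) C = inter A C + inter B C
  K : Div
  Eff : Div → Prop
  eff_zero : Eff 0
  eff_add : ∀ {A B}, Eff A → Eff B → Eff (A + B)
  Irr : Div → Prop
  irr_curve : ∀ {A}, Irr A → Eff A ∧ A ≠ 0
  pa : Div → ℤ
  adjunction : ∀ D, 2 * pa D - 2 = inter K D + inter D D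
  h0O : Div → ℕ
  h1O : Div → ℕ
  h0ω : Div → ℕ
  pa_def : ∀ D, (1 : ℤ) - pa D = (h0O D : ℤ) - (h1O D : ℤ)
  serre : ∀ D, h0ω D = h1O D

attribute [instance] Surface.grp

/-- A curve is a nonzero effective divisor. -/
def Surface.Curve (S : Surface) (D : S.Div) : Prop := S.Eff D ∧ D ≠ 0

/-- `D` is 1-connected: it is a curve and every decomposition `D = A + B`
into curves satisfies `A·B ≥ 1`. -/
def Surface.OneConnected (S : Surface) (D : S.Div) : Prop :=
  S.Curve D ∧ ∀ A B : S.Div, S.Curve A → S.Curve B → A + B = D → 1 ≤ S.inter A B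

/-- The data of a birational morphism `p : T → W` of smooth projective surfaces,
a composition of `s` blow-ups, recorded on the source surface `S = T`:
the total exceptional divisors `E 1, …, E s` (total transforms of the exceptional
curves of the blow-ups), the pullback `pK = p*K_W` of the canonical divisor of `W`,
and the predicate `Exc` of being supported on the `p`-exceptional locus
(i.e. contracted by `p` to a finite set of points). -/
structure Blowdown (S : Surface) (s : ℕ) where
  E : Fin s → S.Div
  pK : S.Div
  Exc : S.Div → Prop
  exc_zero : Exc 0
  exc_sub : ∀ {A B}, Exc A → Exc B → Exc (A - B)
  exc_E : ∀ i, Exc (E i)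
  exc_comp : ∀ {D Γ}, Exc D → S.Eff D → S.Irr Γ → S.Eff (D - Γ) → Exc Γ
  E_curve : ∀ i, S.Curve (E i)
  K_eq : S.K = pK + ∑ i, E i
  pK_exc : ∀ {D}, Exc D → S.inter pK D = 0
  EE : ∀ i j, S.inter (E i) (E j) = if i = j then -1 else 0
  negdef : ∀ {D}, Exc D → D ≠ 0 → S.inter D D < 0
  exc_span : ∀ {D}, Exc D → (∀ i, S.inter D (E i) = 0) → D = 0

/-- The dual graph of a configuration of irreducible curves `C i`: vertices are the
curves, and two distinct curves are adjacent when they meet (intersection number 1). -/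
def configGraph (S : Surface) {n : ℕ} (C : Fin n → S.Div) : SimpleGraph (Fin n) where
  Adj i j := i ≠ j ∧ S.inter (C i) (C j) = 1
  symm := ⟨fun i j hij => ⟨hij.1.symm, by rw [S.inter_comm]; exact hij.2⟩⟩
  loopless := ⟨fun i hi => hi.1 rfl⟩

/-- An A-D-E configuration on `S`: a reduced divisor `∑ C i` whose components `C i`
are distinct `-2`-curves (irreducible, `C i² = -2`, `K·C i = 0`), meeting pairwise
transversally in at most one point, whose dual graph is a tree (connected and acyclic)
and whose intersection matrix is negative definite; these conditions characterize the
configurations whose dual graph is a Dynkin diagram of type Aₙ, Dₙ or Eₙ. -/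
structure ADEConfig (S : Surface) where
  n : ℕ
  npos : 0 < n
  C : Fin n → S.Div
  irr : ∀ i, S.Irr (C i)
  inj : Function.Injective C
  sq : ∀ i, S.inter (C i) (C i) = -2
  KC : ∀ i, S.inter S.K (C i) = 0
  int01 : ∀ i j, i ≠ j → S.inter (C i) (C j) = 0 ∨ S.inter (C i) (C j) = 1
  tree : (configGraph S C).IsTree
  negdef : ∀ a : Fin n → ℤ, a ≠ 0 → ∑ i, ∑ j, a i * a j * S.inter (C i) (C j) < 0

/-- The configuration is of type `Aₙ`: its dual graph is a path. -/
def ADEConfig.IsTypeA {S : Surface} (Δ : ADEConfig S) : Prop :=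
  ∃ e : Fin Δ.n ≃ Fin Δ.n, ∀ i j : Fin Δ.n,
    (configGraph S Δ.C).Adj (e i) (e j) ↔ ((i : ℕ) + 1 = (j : ℕ) ∨ (j : ℕ) + 1 = (i : ℕ))


section AuxLemmas

namespace Surface

variable {S : Surface}

theorem inter_add_right (A B C : S.Div) :
    S.inter A (B + C) = S.inter A B + S.inter A C := by
  rw [S.inter_comm, S.inter_add_left, S.inter_comm B A, S.inter_comm C A]

/-- The intersection with a fixed divisor, as an additive homomorphism. -/
def interR (S : Surface) (A : S.Div) : S.Div →+ ℤ :=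
  AddMonoidHom.mk' (fun B => S.inter A B) (fun B C => inter_add_right A B C)

@[simp] theorem interR_apply (A B : S.Div) : S.interR A B = S.inter A B := rfl

theorem inter_zero_right (A : S.Div) : S.inter A 0 = 0 := map_zero (S.interR A)

theorem inter_zero_left (A : S.Div) : S.inter 0 A = 0 := by
  rw [S.inter_comm]; exact inter_zero_right A

theorem inter_sum_right {ι : Type*} (t : Finset ι) (A : S.Div) (f : ι → S.Div) :
    S.inter A (∑ i ∈ t, f i) = ∑ i ∈ t, S.inter A (f i) :=
  map_sum (S.interR A) f t

theorem inter_sum_left {ι : Type*} (t : Finset ι) (A : S.Div) (f : ι → S.Div) :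
    S.inter (∑ i ∈ t, f i) A = ∑ i ∈ t, S.inter (f i) A := by
  rw [S.inter_comm, inter_sum_right]
  exact Finset.sum_congr rfl fun i _ => S.inter_comm _ _

theorem inter_zsmul_right (c : ℤ) (A B : S.Div) :
    S.inter A (c • B) = c * S.inter A B := map_zsmul (S.interR A) c B

theorem inter_zsmul_left (c : ℤ) (A B : S.Div) :
    S.inter (c • A) B = c * S.inter A B := by
  rw [S.inter_comm, inter_zsmul_right, S.inter_comm]

theorem inter_sub_left (A B C : S.Div) :
    S.inter (A - B) C = S.inter A C - S.inter B C := by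
  rw [S.inter_comm, S.inter_comm A C, S.inter_comm B C]
  exact map_sub (S.interR C) A B

end Surface

namespace Blowdown

variable {S : Surface} {s : ℕ} (B : Blowdown S s)

/-- The divisors supported on the exceptional locus form a subgroup. -/
def excGrp : AddSubgroup S.Div where
  carrier := {D | B.Exc D}
  zero_mem' := B.exc_zero
  add_mem' := fun {A C} hA hC => by
    have h2 : B.Exc (A - (0 - C)) := B.exc_sub hA (B.exc_sub B.exc_zero hC)
    simpa using h2
  neg_mem' := fun {A} hA => by simpa using B.exc_sub B.exc_zero hA

theorem exc_comb {ι : Type*} [Fintype ι] (c : ι → ℤ) (f : ι → S.Div)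
    (hf : ∀ i, B.Exc (f i)) : B.Exc (∑ i, c i • f i) :=
  AddSubgroup.sum_mem B.excGrp fun i _ => AddSubgroup.zsmul_mem B.excGrp (hf i) (c i)

theorem exc_repr {D : S.Div} (hD : B.Exc D) :
    D = ∑ i, (-(S.inter D (B.E i))) • B.E i := by
  have hexc : B.Exc (D - ∑ i, (-(S.inter D (B.E i))) • B.E i) :=
    B.exc_sub hD (B.exc_comb _ _ B.exc_E)
  have hz : ∀ j, S.inter (D - ∑ i, (-(S.inter D (B.E i))) • B.E i) (B.E j) = 0 := by
    intro j
    rw [Surface.inter_sub_left, Surface.inter_sum_left]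
    have hterm : ∀ i ∈ Finset.univ, S.inter ((-(S.inter D (B.E i))) • B.E i) (B.E j)
        = if i = j then S.inter D (B.E i) else 0 := by
      intro i _
      rw [Surface.inter_zsmul_left, B.EE]
      split <;> ring
    rw [Finset.sum_congr rfl hterm, Finset.sum_ite_eq' Finset.univ j]
    simp
  exact sub_eq_zero.mp (B.exc_span hexc hz)

theorem inter_exc {D : S.Div} (hD : B.Exc D) (D' : S.Div) :
    S.inter D D' = -∑ i, S.inter D (B.E i) * S.inter D' (B.E i) := by
  conv_lhs => rw [B.exc_repr hD]
  rw [Surface.inter_sum_left, ← Finset.sum_neg_distrib]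
  refine Finset.sum_congr rfl fun i _ => ?_
  rw [Surface.inter_zsmul_left, S.inter_comm (B.E i) D']
  ring

end Blowdown

/-- A root of square length 2 whose coordinates sum to zero has exactly two nonzero
coordinates, equal to `1` and `-1`. -/
theorem vec_shape {s : ℕ} (c : Fin s → ℤ) (h2 : ∑ i, c i * c i = 2) (h0 : ∑ i, c i = 0) :
    ∃ i j : Fin s, i ≠ j ∧ c i = 1 ∧ c j = -1 ∧ ∀ k, k ≠ i → k ≠ j → c k = 0 := by
  have hbd : ∀ i, c i = -1 ∨ c i = 0 ∨ c i = 1 := by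
    intro i
    have h1 : c i * c i ≤ 2 := by
      rw [← h2]
      exact Finset.single_le_sum (fun j _ => mul_self_nonneg (c j)) (Finset.mem_univ i)
    have h3 : -1 ≤ c i := by nlinarith
    have h4 : c i ≤ 1 := by nlinarith
    omega
  set T := Finset.univ.filter (fun i => c i ≠ 0) with hT
  have hnotT : ∀ x, x ∉ T → c x = 0 := by
    intro x hx
    rw [hT, Finset.mem_filter] at hx
    push_neg at hx
    exact hx (Finset.mem_univ x)
  have hTsum2 : ∑ i ∈ T, c i * c i = 2 := by
    rw [← h2]
    exact Finset.sum_subset (Finset.subset_univ T)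
      (fun x _ hx => by rw [hnotT x hx]; ring)
  have hTsum0 : ∑ i ∈ T, c i = 0 := by
    rw [← h0]
    exact Finset.sum_subset (Finset.subset_univ T) (fun x _ hx => hnotT x hx)
  have hones : ∀ i ∈ T, c i * c i = 1 := by
    intro i hi
    have hi0 : c i ≠ 0 := (Finset.mem_filter.mp hi).2
    rcases hbd i with h | h | h
    · rw [h]; ring
    · exact absurd h hi0
    · rw [h]; ring
  have hcard : T.card = 2 := by
    have h := Finset.sum_congr rfl hones
    rw [hTsum2, Finset.sum_const, nsmul_eq_mul, mul_one] at h
    exact_mod_cast h.symm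
  obtain ⟨a, b, hab, habT⟩ := Finset.card_eq_two.mp hcard
  have hout : ∀ k, k ≠ a → k ≠ b → c k = 0 := by
    intro k hka hkb
    by_contra hk
    have hmem : k ∈ T := Finset.mem_filter.mpr ⟨Finset.mem_univ k, hk⟩
    rw [habT, Finset.mem_insert, Finset.mem_singleton] at hmem
    tauto
  have hsum0 : c a + c b = 0 := by
    rw [habT, Finset.sum_pair hab] at hTsum0
    exact hTsum0
  have haT : a ∈ T := by rw [habT]; exact Finset.mem_insert_self a _
  have ha0 : c a ≠ 0 := (Finset.mem_filter.mp haT).2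
  rcases hbd a with h | h | h
  · exact ⟨b, a, hab.symm, by omega, h, fun k hkb hka => hout k hka hkb⟩
  · exact absurd h ha0
  · exact ⟨a, b, hab, h, by omega, hout⟩

/-- Two orthogonal roots of shape `e_i - e_j` have disjoint supports. -/
theorem vec_disj {s : ℕ} {c d : Fin s → ℤ}
    (hc : ∃ i j : Fin s, i ≠ j ∧ c i = 1 ∧ c j = -1 ∧ ∀ k, k ≠ i → k ≠ j → c k = 0)
    (hd : ∃ i j : Fin s, i ≠ j ∧ d i = 1 ∧ d j = -1 ∧ ∀ k, k ≠ i → k ≠ j → d k = 0)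
    (hortho : ∑ i, c i * d i = 0) (m : Fin s) : c m = 0 ∨ d m = 0 := by
  classical
  by_contra hcon
  push_neg at hcon
  obtain ⟨hcm, hdm⟩ := hcon
  obtain ⟨i1, j1, hij1, hci, hcj, hc0⟩ := hc
  obtain ⟨i2, j2, hij2, hdi, hdj, hd0⟩ := hd
  have hdot : c i2 - c j2 = 0 := by
    have hsub : ∑ i ∈ ({i2, j2} : Finset (Fin s)), c i * d i = ∑ i, c i * d i := by
      refine Finset.sum_subset (Finset.subset_univ _) ?_
      intro k _ hk
      rw [Finset.mem_insert, Finset.mem_singleton] at hk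
      push_neg at hk
      rw [hd0 k hk.1 hk.2, mul_zero]
    rw [Finset.sum_pair hij2, hdi, hdj, hortho] at hsub
    linarith
  have hm2 : m = i2 ∨ m = j2 := by
    by_contra hmm
    push_neg at hmm
    exact hdm (hd0 m hmm.1 hmm.2)
  have h1 : c i2 ≠ 0 ∧ c j2 ≠ 0 := by
    rcases hm2 with rfl | rfl
    · exact ⟨hcm, fun hz => hcm (by omega)⟩
    · exact ⟨fun hz => hcm (by omega), hcm⟩
  have e1 : i2 = i1 ∨ i2 = j1 := by
    by_contra hmm
    push_neg at hmm
    exact h1.1 (hc0 i2 hmm.1 hmm.2)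
  have e2 : j2 = i1 ∨ j2 = j1 := by
    by_contra hmm
    push_neg at hmm
    exact h1.2 (hc0 j2 hmm.1 hmm.2)
  rcases e1 with rfl | rfl <;> rcases e2 with h | h
  · exact hij2 h.symm
  · rw [h] at hdot; omega
  · rw [h] at hdot; omega
  · exact hij2 h.symm

end AuxLemmas

/-- let `X` be a normal projective surface with canonical
singularities `q₁, …, q_h`, smooth elsewhere, with `κ(X) ≥ 0`; let `f : T → X` be
the minimal resolution (so `K_X² = K_T²`, `χ(O_X) = χ(O_T)`, and the exceptional
divisors `Δ_q` are disjoint A-D-E configurations on `T`), and `p : T → W` the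
morphism to the minimal model (so `K_W` is nef and `s = K_W² - K_T²`).  With
`ν(q) = e(Δ_q) - 1/|G_q| = (n_q + 1) - 1/|G_q|` (`G_q` the local fundamental
group, of order `n_q + 1` for an `A_{n_q}` singularity), Miyaoka's inequality for
the (nef) canonical divisor of `W` applied to the configurations not contracted
by `p` yields `∑ ν(qᵢ) ≤ 12χ(O_X) - (4/3)K_X² - s/3`; in particular, if
`∑ ν(qᵢ) = 12χ(O_X) - (4/3)K_X²` then `K_X` (equivalently `K_T = f*K_X`) is nef. -/
theorem stmt19 (S : Surface) (s : ℕ) (B : Blowdown S s)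
    (hnef : ∀ D : S.Div, S.Curve D → 0 ≤ S.inter B.pK D)
    (h : ℕ) (Δ : Fin h → ADEConfig S)
    (hdisj : ∀ q q' : Fin h, q ≠ q' → ∀ a b,
      (Δ q).C a ≠ (Δ q').C b ∧ S.inter ((Δ q).C a) ((Δ q').C b) = 0)
    (G : Fin h → ℕ) (hG : ∀ q, 0 < G q)
    (hGA : ∀ q, (Δ q).IsTypeA → G q = (Δ q).n + 1)
    (χ : ℤ)
    (ν : Fin h → ℚ) (hν : ∀ q, ν q = ((Δ q).n + 1 : ℚ) - 1 / (G q : ℚ))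
    (Qc : Finset (Fin h)) (hQc : ∀ q, q ∈ Qc ↔ ∀ a, B.Exc ((Δ q).C a))
    (hMiyaoka : ∑ q ∈ Qcᶜ, ν q ≤
      12 * (χ : ℚ) - (4 / 3) * (S.inter B.pK B.pK : ℚ)) :
    (∑ q, ν q ≤ 12 * (χ : ℚ) - (4 / 3) * (S.inter S.K S.K : ℚ) - (s : ℚ) / 3) ∧
    (∑ q, ν q = 12 * (χ : ℚ) - (4 / 3) * (S.inter S.K S.K : ℚ) →
      ∀ D : S.Div, S.Curve D → 0 ≤ S.inter S.K D) := by
  classical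
  have hExcC : ∀ q : Fin h, q ∈ Qc → ∀ a, B.Exc ((Δ q).C a) := fun q hq => (hQc q).mp hq
  have hsq : ∀ (q : Fin h), q ∈ Qc → ∀ a,
      ∑ i, S.inter ((Δ q).C a) (B.E i) * S.inter ((Δ q).C a) (B.E i) = 2 := by
    intro q hq a
    have hcc := B.inter_exc (hExcC q hq a) ((Δ q).C a)
    rw [(Δ q).sq a] at hcc
    linarith
  have hs0 : ∀ (q : Fin h), q ∈ Qc → ∀ a, ∑ i, S.inter ((Δ q).C a) (B.E i) = 0 := by
    intro q hq a
    have hK := (Δ q).KC a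
    rw [B.K_eq, S.inter_add_left, Surface.inter_sum_left] at hK
    rw [B.pK_exc (hExcC q hq a), zero_add] at hK
    rw [← hK]
    exact Finset.sum_congr rfl fun i _ => S.inter_comm _ _
  have hshape : ∀ (q : Fin h) (hq : q ∈ Qc) (a : Fin (Δ q).n),
      ∃ i j : Fin s, i ≠ j ∧ S.inter ((Δ q).C a) (B.E i) = 1 ∧
        S.inter ((Δ q).C a) (B.E j) = -1 ∧
        ∀ k, k ≠ i → k ≠ j → S.inter ((Δ q).C a) (B.E k) = 0 :=
    fun q hq a => vec_shape _ (hsq q hq a) (hs0 q hq a)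
  have hds : ∀ (q q' : Fin h), q ∈ Qc → q' ∈ Qc → q ≠ q' →
      ∀ a b i, S.inter ((Δ q).C a) (B.E i) = 0 ∨ S.inter ((Δ q').C b) (B.E i) = 0 := by
    intro q q' hq hq' hne a b i
    have hortho : ∑ i, S.inter ((Δ q).C a) (B.E i) * S.inter ((Δ q').C b) (B.E i) = 0 := by
      have hcc := B.inter_exc (hExcC q hq a) ((Δ q').C b)
      rw [(hdisj q q' hne a b).2] at hcc
      linarith
    exact vec_disj (hshape q hq a) (hshape q' hq' b) hortho i
  -- a distinguished coordinate in the support of each contracted configuration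
  have hstar : ∀ q : {x : Fin h // x ∈ Qc}, ∃ i : Fin s,
      S.inter ((Δ q.1).C ⟨0, (Δ q.1).npos⟩) (B.E i) = 1 := by
    intro q
    obtain ⟨i, j, _, h1, _, _⟩ := hshape q.1 q.2 ⟨0, (Δ q.1).npos⟩
    exact ⟨i, h1⟩
  choose iStar hiStar using hstar
  set V : ((q : {x : Fin h // x ∈ Qc}) × Option (Fin (Δ q.1).n)) → (Fin s → ℚ) :=
    fun p => p.2.elim (fun i => if i = iStar p.1 then 1 else 0)
      (fun a i => (S.inter ((Δ p.1.1).C a) (B.E i) : ℚ)) with hV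
  have hindZ : LinearIndependent ℤ V := by
    rw [Fintype.linearIndependent_iff]
    intro g hg
    have hcoord : ∀ i : Fin s, ∑ q : {x : Fin h // x ∈ Qc},
        ∑ b : Option (Fin (Δ q.1).n), g ⟨q, b⟩ • V ⟨q, b⟩ i = 0 := by
      intro i
      have h1 := congrFun hg i
      rw [Finset.sum_apply, ← Finset.univ_sigma_univ, Finset.sum_sigma] at h1
      simpa using h1
    have key : ∀ q0 : {x : Fin h // x ∈ Qc}, ∀ b, g ⟨q0, b⟩ = 0 := by
      intro q0
      have hblock : ∀ i : Fin s,
          ∑ b : Option (Fin (Δ q0.1).n), g ⟨q0, b⟩ • V ⟨q0, b⟩ i = 0 := by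
        intro i
        by_cases hin : ∀ a, S.inter ((Δ q0.1).C a) (B.E i) = 0
        · refine Finset.sum_eq_zero fun b _ => ?_
          rcases b with _ | a
          · have hne : i ≠ iStar q0 := by
              intro hEq
              have h2 := hiStar q0
              rw [← hEq, hin _] at h2
              norm_num at h2
            simp [hV, hne]
          · simp [hV, hin a]
        · push_neg at hin
          obtain ⟨a0, ha0⟩ := hin
          have h1 := hcoord i
          rw [Finset.sum_eq_single q0] at h1
          · exact h1
          · intro q _ hqne
            have hvalne : q.1 ≠ q0.1 := fun hv => hqne (Subtype.ext hv)
            refine Finset.sum_eq_zero fun b _ => ?_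
            rcases b with _ | a
            · have hne : i ≠ iStar q := by
                intro hEq
                rcases hds q.1 q0.1 q.2 q0.2 hvalne ⟨0, (Δ q.1).npos⟩ a0 i with h3 | h3
                · rw [hEq, hiStar q] at h3
                  norm_num at h3
                · exact ha0 h3
              simp [hV, hne]
            · rcases hds q.1 q0.1 q.2 q0.2 hvalne a a0 i with h3 | h3
              · simp [hV, h3]
              · exact absurd h3 ha0
          · intro hq0
            exact absurd (Finset.mem_univ q0) hq0
      have hnone : g ⟨q0, none⟩ = 0 := by
        have h2 : ∑ i, ∑ b : Option (Fin (Δ q0.1).n), g ⟨q0, b⟩ • V ⟨q0, b⟩ i = 0 :=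
          Finset.sum_eq_zero fun i _ => hblock i
        rw [Finset.sum_comm] at h2
        have h3 : ∀ b ∈ (Finset.univ : Finset (Option (Fin (Δ q0.1).n))),
            ∑ i, g ⟨q0, b⟩ • V ⟨q0, b⟩ i = g ⟨q0, b⟩ • ∑ i, V ⟨q0, b⟩ i :=
          fun b _ => (Finset.smul_sum).symm
        rw [Finset.sum_congr rfl h3, Fintype.sum_option] at h2
        have hv1 : ∑ i, V ⟨q0, none⟩ i = 1 := by
          simp [hV]
        have hv2 : ∀ a, ∑ i, V ⟨q0, some a⟩ i = 0 := by
          intro a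
          have h4 := hs0 q0.1 q0.2 a
          simp only [hV, Option.elim]
          exact_mod_cast h4
        rw [hv1] at h2
        have h5 : ∑ a, g ⟨q0, some a⟩ • (∑ i, V ⟨q0, some a⟩ i) = 0 :=
          Finset.sum_eq_zero fun a _ => by rw [hv2 a, smul_zero]
        rw [h5, add_zero] at h2
        have h6 : ((g ⟨q0, none⟩ : ℤ) : ℚ) = 0 := by
          simpa [zsmul_eq_mul] using h2
        exact_mod_cast h6
      have hsome : ∀ a, g ⟨q0, some a⟩ = 0 := by
        have hrel : ∀ i, ∑ a, g ⟨q0, some a⟩ * S.inter ((Δ q0.1).C a) (B.E i) = 0 := by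
          intro i
          have h2 := hblock i
          rw [Fintype.sum_option, hnone, zero_smul, zero_add] at h2
          have h7 : ((∑ a, g ⟨q0, some a⟩ * S.inter ((Δ q0.1).C a) (B.E i) : ℤ) : ℚ) = 0 := by
            push_cast
            simpa [hV, zsmul_eq_mul] using h2
          exact_mod_cast h7
        set z : Fin (Δ q0.1).n → ℤ := fun a => g ⟨q0, some a⟩ with hz
        have hDvExc : B.Exc (∑ a, z a • (Δ q0.1).C a) :=
          B.exc_comb z _ (fun a => hExcC q0.1 q0.2 a)
        have hDvE : ∀ i, S.inter (∑ a, z a • (Δ q0.1).C a) (B.E i) = 0 := by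
          intro i
          rw [Surface.inter_sum_left, ← hrel i]
          exact Finset.sum_congr rfl fun a _ => Surface.inter_zsmul_left _ _ _
        have hDv0 : (∑ a, z a • (Δ q0.1).C a) = 0 := B.exc_span hDvExc hDvE
        have hzzero : z = 0 := by
          by_contra hzz
          have hneg := (Δ q0.1).negdef z hzz
          have hq2 : S.inter (∑ a, z a • (Δ q0.1).C a) (∑ a, z a • (Δ q0.1).C a) = 0 := by
            rw [hDv0]; exact Surface.inter_zero_left 0
          rw [Surface.inter_sum_left] at hq2
          have hexp : ∀ a ∈ (Finset.univ : Finset (Fin (Δ q0.1).n)),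
              S.inter (z a • (Δ q0.1).C a) (∑ b, z b • (Δ q0.1).C b)
              = ∑ b, z a * z b * S.inter ((Δ q0.1).C a) ((Δ q0.1).C b) := by
            intro a _
            rw [Surface.inter_zsmul_left, Surface.inter_sum_right, Finset.mul_sum]
            exact Finset.sum_congr rfl fun b _ => by
              rw [Surface.inter_zsmul_right]; ring
          rw [Finset.sum_congr rfl hexp] at hq2
          linarith
        intro a
        have h8 := congrFun hzzero a
        simpa [hz] using h8
      intro b
      rcases b with _ | a
      · exact hnone
      · exact hsome a
    intro p
    obtain ⟨q0, b⟩ := p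
    exact key q0 b
  have hindQ : LinearIndependent ℚ V := (LinearIndependent.iff_fractionRing ℤ ℚ).mp hindZ
  have hcard := hindQ.fintype_card_le_finrank
  rw [Module.finrank_pi] at hcard
  have hcardI : Fintype.card ((q : {x : Fin h // x ∈ Qc}) × Option (Fin (Δ q.1).n))
      = ∑ q ∈ Qc, ((Δ q).n + 1) := by
    rw [Fintype.card_sigma, ← Finset.sum_coe_sort Qc (fun q => (Δ q).n + 1)]
    exact Finset.sum_congr rfl fun q _ => by simp
  have hcount : (∑ q ∈ Qc, ((Δ q).n + 1) : ℕ) ≤ s := by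
    rw [← hcardI]
    simpa using hcard
  have hKK : S.inter S.K S.K = S.inter B.pK B.pK - (s : ℤ) := by
    have h1 : S.inter B.pK (∑ i, B.E i) = 0 := by
      rw [Surface.inter_sum_right]
      exact Finset.sum_eq_zero fun i _ => B.pK_exc (B.exc_E i)
    have h2 : S.inter (∑ i, B.E i) B.pK = 0 := by rw [S.inter_comm]; exact h1
    have h3 : S.inter (∑ i, B.E i) (∑ i, B.E i) = -(s : ℤ) := by
      rw [Surface.inter_sum_left]
      have hterm : ∀ i ∈ (Finset.univ : Finset (Fin s)),
          S.inter (B.E i) (∑ j, B.E j) = -1 := by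
        intro i _
        rw [Surface.inter_sum_right]
        simp [B.EE]
      rw [Finset.sum_congr rfl hterm, Finset.sum_const, nsmul_eq_mul]
      simp
    rw [B.K_eq, S.inter_add_left, Surface.inter_add_right, Surface.inter_add_right,
      h1, h2, h3]
    ring
  have hνle : ∀ q ∈ Qc, ν q ≤ ((Δ q).n + 1 : ℚ) := by
    intro q _
    rw [hν q]
    have h1 : (0:ℚ) ≤ 1 / (G q : ℚ) := by positivity
    linarith
  have hQcsum : ∑ q ∈ Qc, ν q ≤ (s : ℚ) := by
    calc ∑ q ∈ Qc, ν q ≤ ∑ q ∈ Qc, ((Δ q).n + 1 : ℚ) := Finset.sum_le_sum hνle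
      _ = ((∑ q ∈ Qc, ((Δ q).n + 1) : ℕ) : ℚ) := by norm_cast
      _ ≤ (s : ℚ) := by exact_mod_cast hcount
  have hmain : ∑ q, ν q ≤ 12 * (χ : ℚ) - (4 / 3) * (S.inter S.K S.K : ℚ) - (s : ℚ) / 3 := by
    have hsplit : ∑ q, ν q = ∑ q ∈ Qc, ν q + ∑ q ∈ Qcᶜ, ν q :=
      (Finset.sum_add_sum_compl Qc ν).symm
    have hKKQ : (S.inter S.K S.K : ℚ) = (S.inter B.pK B.pK : ℚ) - (s : ℚ) := by
      exact_mod_cast hKK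
    rw [hsplit, hKKQ]
    linarith [hQcsum, hMiyaoka]
  refine ⟨hmain, ?_⟩
  intro heq D hD
  have hs3 : (s : ℚ) ≤ 0 := by
    rw [heq] at hmain
    linarith
  have hs00 : s = 0 := by
    have h9 : (s : ℚ) = 0 := le_antisymm hs3 (by positivity)
    exact_mod_cast h9
  subst hs00
  have hKpK : S.K = B.pK := by
    rw [B.K_eq]
    simp
  rw [hKpK]
  exact hnef D hD
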